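/- Let n ∈ ℕ, ξ > 0, and let r : Fin n → ℂ with |r_i| = 1 for every i. Define q(z) = ∏_{i}(z − (1+ξ)r_i). Then for all z, w ∈ ℂ with |z| = |w| = 1, |q(z)| ≤ (1 + 2/ξ)^n · |q(w)|. Consequently sup_{|z|=1}|q(z)| ≤ (1+2/ξ)^n · inf_{|z|=1}|q(z)|, i.e., κ(q) ≤ (1+2/ξ)^n. -/

import Mathlib

/-- For `q(z) = ∏ i, (z - (1+ξ) r i)` with all `r i` on the unit circle and `ξ > 0`:
`|q(z)| ≤ (1+2/ξ)^n |q(w)|` for all unit-modulus `z, w`; consequently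
`sup_{|z|=1}|q(z)| ≤ (1+2/ξ)^n · inf_{|z|=1}|q(z)|`, i.e. `κ(q) ≤ (1+2/ξ)^n`. -/
theorem pseudo_approximant_condition_number (n : ℕ) (ξ : ℝ) (hξ : 0 < ξ)
    (r : Fin n → ℂ) (hr : ∀ i, ‖r i‖ = 1) :
    (∀ z w : ℂ, ‖z‖ = 1 → ‖w‖ = 1 →
      ‖∏ i, (z - ((1 + ξ : ℝ) : ℂ) * r i)‖ ≤
        (1 + 2 / ξ) ^ n * ‖∏ i, (w - ((1 + ξ : ℝ) : ℂ) * r i)‖) ∧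
    (⨆ z : Metric.sphere (0 : ℂ) 1, ‖∏ i, ((z : ℂ) - ((1 + ξ : ℝ) : ℂ) * r i)‖ ≤
      (1 + 2 / ξ) ^ n *
        ⨅ z : Metric.sphere (0 : ℂ) 1, ‖∏ i, ((z : ℂ) - ((1 + ξ : ℝ) : ℂ) * r i)‖) := by
  have habs : ∀ i, ‖((1 + ξ : ℝ) : ℂ) * r i‖ = 1 + ξ := by
    intro i
    rw [norm_mul, hr i, Complex.norm_real, Real.norm_eq_abs, mul_one, abs_of_pos (by linarith)]
  have hupper : ∀ z : ℂ, ‖z‖ = 1 →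
      ‖∏ i, (z - ((1 + ξ : ℝ) : ℂ) * r i)‖ ≤ (2 + ξ) ^ n := by
    intro z hz
    rw [norm_prod]
    calc ∏ i, ‖z - ((1 + ξ : ℝ) : ℂ) * r i‖
        ≤ ∏ _i : Fin n, (2 + ξ) := by
          apply Finset.prod_le_prod (fun i _ => norm_nonneg _)
          intro i _
          calc ‖z - ((1 + ξ : ℝ) : ℂ) * r i‖
              ≤ ‖z‖ + ‖((1 + ξ : ℝ) : ℂ) * r i‖ :=
                norm_sub_le _ _
            _ = 2 + ξ := by rw [hz, habs i]; ring
      _ = (2 + ξ) ^ n := by simp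
  have hlower : ∀ z : ℂ, ‖z‖ = 1 →
      ξ ^ n ≤ ‖∏ i, (z - ((1 + ξ : ℝ) : ℂ) * r i)‖ := by
    intro z hz
    rw [norm_prod]
    calc ξ ^ n = ∏ _i : Fin n, ξ := by simp
      _ ≤ ∏ i, ‖z - ((1 + ξ : ℝ) : ℂ) * r i‖ := by
          apply Finset.prod_le_prod (fun i _ => le_of_lt hξ)
          intro i _
          have := norm_sub_norm_le (((1 + ξ : ℝ) : ℂ) * r i) z
          rw [habs i, hz] at this
          calc ξ = (1 + ξ) - 1 := by ring
            _ ≤ ‖((1 + ξ : ℝ) : ℂ) * r i - z‖ := by linarith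
            _ = ‖z - ((1 + ξ : ℝ) : ℂ) * r i‖ := norm_sub_rev _ _
  have hC : (2 + ξ) ^ n = (1 + 2 / ξ) ^ n * ξ ^ n := by
    rw [← mul_pow]
    congr 1
    field_simp
    ring
  have key : ∀ z w : ℂ, ‖z‖ = 1 → ‖w‖ = 1 →
      ‖∏ i, (z - ((1 + ξ : ℝ) : ℂ) * r i)‖ ≤
        (1 + 2 / ξ) ^ n * ‖∏ i, (w - ((1 + ξ : ℝ) : ℂ) * r i)‖ := by
    intro z w hz hw
    calc ‖∏ i, (z - ((1 + ξ : ℝ) : ℂ) * r i)‖ ≤ (2 + ξ) ^ n := hupper z hz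
      _ = (1 + 2 / ξ) ^ n * ξ ^ n := hC
      _ ≤ (1 + 2 / ξ) ^ n * ‖∏ i, (w - ((1 + ξ : ℝ) : ℂ) * r i)‖ := by
          apply mul_le_mul_of_nonneg_left (hlower w hw)
          positivity
  refine ⟨key, ?_⟩
  have hne : Nonempty (Metric.sphere (0 : ℂ) 1) := by
    exact ⟨⟨1, by simp⟩⟩
  have hmem : ∀ z : Metric.sphere (0 : ℂ) 1, ‖(z : ℂ)‖ = 1 := by
    intro z
    have := z.2
    simpa [Complex.dist_eq] using this
  apply ciSup_le
  intro z
  have hCpos : (0:ℝ) < (1 + 2 / ξ) ^ n := by positivity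
  rw [← div_le_iff₀' hCpos]
  apply le_ciInf
  intro w
  rw [div_le_iff₀' hCpos]
  exact key z w (hmem z) (hmem w)
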